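/- Let l ∈ ℕ, t_c, t_p ∈ ℝ with t_c, t_p > 0, t_Map, t_a ∈ ℝ with t_Map, t_a ≥ 0 and t_Map + t_a > 0, and additionally assume t_a > 0. Then the function a(K) = (t_p + t_c + t_Map + (l-1)·t_a) / ((K-1)·t_a + t_p + (log₂(K)+1)·t_c + (t_Map + (l-K)·t_a)/K), defined on (1, ∞), has exactly one critical point K₀ in (1, ∞), and K₀ is a strict local (indeed global on [1,∞)) maximum of a, provided -t_a - t_c/ln 2 + t_Map + l·t_a > 0 (so that K₀ > 1). -/

import Mathlib

set_option maxHeartbeats 1000000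


/-- Proposition 1: the BSF speedup function has exactly one critical point on
(1, ∞), and it is the (global on [1, ∞)) maximum. -/
theorem bsf_speedup_unique_max (l : ℕ)
    (t_p t_c t_Map t_a : ℝ) (htp : 0 < t_p) (htc : 0 < t_c)
    (htMap : 0 ≤ t_Map) (hta0 : 0 ≤ t_a) (hsum : 0 < t_Map + t_a) (hta : 0 < t_a)
    (hgt1 : 0 < -t_a - t_c / Real.log 2 + t_Map + (l : ℝ) * t_a) :
    ∃ K₀ : ℝ, K₀ ∈ Set.Ioi (1 : ℝ) ∧
      deriv (fun K : ℝ => (t_p + t_c + t_Map + ((l : ℝ) - 1) * t_a) /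
        ((K - 1) * t_a + t_p + (Real.logb 2 K + 1) * t_c +
          (t_Map + ((l : ℝ) - K) * t_a) / K)) K₀ = 0 ∧
      (∀ K ∈ Set.Ioi (1 : ℝ),
        deriv (fun K : ℝ => (t_p + t_c + t_Map + ((l : ℝ) - 1) * t_a) /
          ((K - 1) * t_a + t_p + (Real.logb 2 K + 1) * t_c +
            (t_Map + ((l : ℝ) - K) * t_a) / K)) K = 0 → K = K₀) ∧
      IsMaxOn (fun K : ℝ => (t_p + t_c + t_Map + ((l : ℝ) - 1) * t_a) /
        ((K - 1) * t_a + t_p + (Real.logb 2 K + 1) * t_c +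
          (t_Map + ((l : ℝ) - K) * t_a) / K)) (Set.Ici 1) K₀ := by
  have hlog2 : (0:ℝ) < Real.log 2 := Real.log_pos one_lt_two
  set c := t_c / Real.log 2 with hc
  set M := t_Map + (l:ℝ) * t_a with hMdef
  set D : ℝ → ℝ := fun K => (K - 1) * t_a + t_p + (Real.logb 2 K + 1) * t_c +
      (t_Map + ((l : ℝ) - K) * t_a) / K with hDdef
  set N := t_p + t_c + t_Map + ((l:ℝ) - 1) * t_a with hNdef
  have hfD : (fun K : ℝ => N / ((K - 1) * t_a + t_p + (Real.logb 2 K + 1) * t_c +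
      (t_Map + ((l : ℝ) - K) * t_a) / K)) = fun K => N / D K := rfl
  clear_value c M D N
  rw [hfD]
  clear hfD
  have hcpos : 0 < c := by rw [hc]; exact div_pos htc hlog2
  have hMgt : t_a + c < M := by rw [hMdef, hc]; linarith
  have hMpos : 0 < M := by linarith
  have hNpos : 0 < N := by
    have : N = t_p + t_c + (M - t_a) := by rw [hNdef, hMdef]; ring
    rw [this]; linarith
  have hDpos : ∀ K : ℝ, 1 ≤ K → 0 < D K := by
    intro K hK
    have hK0 : (0:ℝ) < K := by linarith
    have hlogb : 0 ≤ Real.logb 2 K := Real.logb_nonneg one_lt_two hK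
    have h1 : (K - 1) * t_a + (t_Map + ((l:ℝ) - K) * t_a) / K
        = (t_a * (K - 1)^2 + (M - t_a)) / K := by
      rw [hMdef]; field_simp; ring
    have h2 : 0 < (t_a * (K - 1)^2 + (M - t_a)) / K := by
      apply div_pos _ hK0; nlinarith [sq_nonneg (K - 1)]
    have h3 : 0 < (Real.logb 2 K + 1) * t_c := by nlinarith
    rw [hDdef]
    simp only []
    linarith [h1, h2, h3]
  have hDer : ∀ K : ℝ, 0 < K → HasDerivAt D (t_a + c / K - M / K ^ 2) K := by
    intro K hK
    have hKne : K ≠ 0 := ne_of_gt hK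
    have h1 : HasDerivAt (fun K : ℝ => (K - 1) * t_a) (1 * t_a) K :=
      ((hasDerivAt_id K).sub_const 1).mul_const t_a
    have hlogb : HasDerivAt (fun K : ℝ => Real.logb 2 K) (K⁻¹ / Real.log 2) K := by
      have := (Real.hasDerivAt_log hKne).div_const (Real.log 2)
      simpa [Real.log_div_log] using this
    have h2 : HasDerivAt (fun K : ℝ => (Real.logb 2 K + 1) * t_c)
        ((K⁻¹ / Real.log 2) * t_c) K := (hlogb.add_const 1).mul_const t_c
    have h3n : HasDerivAt (fun K : ℝ => t_Map + ((l:ℝ) - K) * t_a) ((0 - 1) * t_a) K :=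
      (((hasDerivAt_const K ((l:ℝ))).sub (hasDerivAt_id K)).mul_const t_a).const_add t_Map
    have h3 : HasDerivAt (fun K : ℝ => (t_Map + ((l:ℝ) - K) * t_a) / K)
        ((((0 - 1) * t_a) * K - (t_Map + ((l:ℝ) - K) * t_a) * 1) / K ^ 2) K :=
      h3n.div (hasDerivAt_id K) hKne
    have h := ((h1.add_const t_p).add h2).add h3
    rw [hDdef]
    refine h.congr_deriv ?_
    rw [hc, hMdef]
    field_simp
    ring
  -- the unique positive root of t_a K² + c K - M
  set s := Real.sqrt (c ^ 2 + 4 * t_a * M) with hs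
  have hs2 : s ^ 2 = c ^ 2 + 4 * t_a * M :=
    Real.sq_sqrt (by nlinarith [sq_nonneg c, mul_pos hta hMpos])
  have hsnn : 0 ≤ s := by rw [hs]; exact Real.sqrt_nonneg _
  clear_value s
  set K₀ := (-c + s) / (2 * t_a) with hK₀def
  have h2t : 2 * t_a * K₀ = -c + s := by
    rw [hK₀def]; field_simp
  clear_value K₀
  have h0 : 4 * t_a * (t_a * K₀ ^ 2 + c * K₀ - M) = 0 := by
    linear_combination (2 * t_a * K₀ + c + s) * h2t + hs2
  have hroot : t_a * K₀ ^ 2 + c * K₀ - M = 0 :=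
    (mul_eq_zero.mp h0).resolve_left (by positivity)
  have hK₀pos : 0 < K₀ := by
    have hsc : c < s := by nlinarith
    have : (0:ℝ) < -c + s := by linarith
    nlinarith [h2t]
  have hK₀gt1 : 1 < K₀ := by
    by_contra h
    push_neg at h
    nlinarith [hroot, hMgt, hK₀pos,
      mul_nonneg (mul_nonneg hta.le (sub_nonneg.mpr h)) (by linarith : (0:ℝ) ≤ 1 + K₀),
      mul_nonneg hcpos.le (sub_nonneg.mpr h)]
  have hgmono : ∀ x y : ℝ, 0 < x → x < y → t_a * x ^ 2 + c * x < t_a * y ^ 2 + c * y := by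
    intro x y hx hxy
    have h1 : 0 < t_a * ((y - x) * (y + x)) :=
      mul_pos hta (mul_pos (sub_pos.mpr hxy) (by linarith))
    have h2 : 0 < c * (y - x) := mul_pos hcpos (sub_pos.mpr hxy)
    have key : t_a * y ^ 2 + c * y - (t_a * x ^ 2 + c * x)
        = t_a * ((y - x) * (y + x)) + c * (y - x) := by ring
    linarith [h1, h2, key]
  have hderivA : ∀ K : ℝ, 1 ≤ K →
      deriv (fun K => N / D K) K = -(N * (t_a + c / K - M / K ^ 2)) / (D K) ^ 2 := by
    intro K hK
    have hK0 : (0:ℝ) < K := by linarith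
    have h := (hasDerivAt_const K N).div (hDer K hK0) (ne_of_gt (hDpos K hK))
    rw [show (fun K => N / D K) = (fun x => N) / D from rfl, h.deriv]; ring
  have hD'eq : ∀ K : ℝ, 0 < K →
      t_a + c / K - M / K ^ 2 = (t_a * K ^ 2 + c * K - M) / K ^ 2 := by
    intro K hK; field_simp
  have hD'K₀ : t_a + c / K₀ - M / K₀ ^ 2 = 0 := by
    rw [hD'eq K₀ hK₀pos, hroot, zero_div]
  -- monotonicity of D
  have hanti : StrictAntiOn D (Set.Icc 1 K₀) := by
    apply strictAntiOn_of_deriv_neg (convex_Icc 1 K₀)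
    · intro K hK
      have hK0 : (0:ℝ) < K := by have := hK.1; linarith
      exact (hDer K hK0).continuousAt.continuousWithinAt
    · intro K hK
      rw [interior_Icc] at hK
      have hK0 : (0:ℝ) < K := by have := hK.1; linarith
      rw [(hDer K hK0).deriv, hD'eq K hK0]
      apply div_neg_of_neg_of_pos _ (pow_pos hK0 2)
      have := hgmono K K₀ hK0 hK.2
      linarith [hroot]
  have hmono : MonotoneOn D (Set.Ici K₀) := by
    apply monotoneOn_of_deriv_nonneg (convex_Ici K₀)
    · intro K hK
      have hK0 : (0:ℝ) < K := lt_of_lt_of_le hK₀pos hK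
      exact (hDer K hK0).continuousAt.continuousWithinAt
    · intro K hK
      rw [interior_Ici] at hK
      have hK0 : (0:ℝ) < K := lt_trans hK₀pos hK
      exact (hDer K hK0).differentiableAt.differentiableWithinAt
    · intro K hK
      rw [interior_Ici] at hK
      have hK0 : (0:ℝ) < K := lt_trans hK₀pos hK
      rw [(hDer K hK0).deriv, hD'eq K hK0]
      apply div_nonneg _ (le_of_lt (pow_pos hK0 2))
      have := hgmono K₀ K hK₀pos hK
      linarith [hroot]
  refine ⟨K₀, hK₀gt1, ?_, ?_, ?_⟩
  · rw [hderivA K₀ hK₀gt1.le, hD'K₀]; simp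
  · intro K hK hd
    have hK1 : (1:ℝ) < K := hK
    rw [hderivA K hK1.le] at hd
    have hDne : (D K) ^ 2 ≠ 0 := pow_ne_zero _ (ne_of_gt (hDpos K hK1.le))
    have hprod : N * (t_a + c / K - M / K ^ 2) = 0 := by
      have := (div_eq_zero_iff.mp hd).resolve_right hDne
      linarith
    have hD'0 : t_a + c / K - M / K ^ 2 = 0 :=
      (mul_eq_zero.mp hprod).resolve_left (ne_of_gt hNpos)
    have hK0 : (0:ℝ) < K := by linarith
    rw [hD'eq K hK0] at hD'0
    have hg0 : t_a * K ^ 2 + c * K - M = 0 :=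
      (div_eq_zero_iff.mp hD'0).resolve_right (pow_ne_zero _ (ne_of_gt hK0))
    rcases lt_trichotomy K K₀ with h | h | h
    · exfalso; have := hgmono K K₀ hK0 h; linarith [hroot]
    · exact h
    · exfalso; have := hgmono K₀ K hK₀pos h; linarith [hroot]
  · rw [isMaxOn_iff]
    intro K hK
    have hK1 : (1:ℝ) ≤ K := hK
    have h1 := hDpos K hK1
    have h2 := hDpos K₀ hK₀gt1.le
    have hDle : D K₀ ≤ D K := by
      rcases le_total K K₀ with h | h
      · exact hanti.antitoneOn ⟨hK1, h⟩ ⟨hK₀gt1.le, le_rfl⟩ h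
      · exact hmono (Set.mem_Ici.mpr le_rfl) (Set.mem_Ici.mpr h) h
    exact div_le_div_of_nonneg_left hNpos.le h2 hDle
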